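/- Let U ⊆ TM be an open set disjoint from the zero section. A 1-form τ on U belongs to the class of time (τ ≡ α/α̇ mod the contact system at each point where α̇ ≠ 0, for every 1-form α on M) if and only if τ is horizontal and ⟨τ, \dot d⟩ = 1, i.e. τ_{v_a}(v_a) = 1 for all v_a ∈ U. Consequently ⟨τ, D⟩ = 1 for every second order differential equation D. -/

import Mathlib

open Bundle Manifold

noncomputable section

variable {E : Type*} [NormedAddCommGroup E] [NormedSpace ℝ E]
  {H : Type*} [TopologicalSpace H] (I : ModelWithCorners ℝ E H)
  (M : Type*) [TopologicalSpace M] [ChartedSpace H M] [IsManifold I (⊤ : ℕ∞) M]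

/-- Vector fields on the tangent bundle `TM`. -/
def VFTB := ∀ v : TangentBundle I M, TangentSpace I.tangent v

/-- Pointwise 1-forms on `TM`. -/
def OneFormTB := ∀ v : TangentBundle I M, TangentSpace I.tangent v →L[ℝ] ℝ

/-- Pointwise 2-forms on `TM`. -/
def TwoFormTB :=
  ∀ v : TangentBundle I M, TangentSpace I.tangent v →L[ℝ] TangentSpace I.tangent v →L[ℝ] ℝ

/-- Pseudo-Riemannian metrics on `M`, pointwise. -/
def Metric2 := ∀ a : M, TangentSpace I a →L[ℝ] TangentSpace I a →L[ℝ] ℝ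

/-- 1-forms on `M`. -/
def OneFormM := ∀ a : M, TangentSpace I a →L[ℝ] ℝ

/-- Vector fields on `M`. -/
def VFM := ∀ a : M, TangentSpace I a

variable {I M}

/-- The differential of the projection `π : TM → M` at `v`. -/
def dproj (v : TangentBundle I M) : TangentSpace I.tangent v →L[ℝ] TangentSpace I v.proj :=
  mfderiv I.tangent I (Bundle.TotalSpace.proj : TangentBundle I M → M) v

/-- Second order differential equation: `dπ (D v) = v`. -/
def IsSecondOrder (D : VFTB I M) : Prop := ∀ v : TangentBundle I M, dproj v (D v) = v.snd

/-- Vertical tangent vectors to `TM`. -/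
def IsVerticalAt (v : TangentBundle I M) (X : TangentSpace I.tangent v) : Prop := dproj v X = 0

/-- A 1-form on `TM` is horizontal at `v` when it is the pull-back of a 1-form on `M`. -/
def IsHorizontalAt (ω : OneFormTB I M) (v : TangentBundle I M) : Prop :=
  ∃ φ : TangentSpace I v.proj →L[ℝ] ℝ, ω v = φ.comp (dproj v)

/-- Vertical lift of `w ∈ T_{π v}M` to a tangent vector of `TM` at `v`. -/
def vlift (v : TangentBundle I M) (w : TangentSpace I v.proj) : TangentSpace I.tangent v :=
  mfderiv 𝓘(ℝ, ℝ) I.tangent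
    (fun t : ℝ => (⟨v.proj, v.snd + t • w⟩ : TangentBundle I M)) 0 (1 : ℝ)

/-- Smoothness of a vector field on `TM`, viewed as a section of `T(TM)`. -/
def SmoothVF (X : VFTB I M) : Prop :=
  ContMDiff I.tangent I.tangent.tangent (⊤ : ℕ∞)
    (fun v : TangentBundle I M => (⟨v, X v⟩ : TangentBundle I.tangent (TangentBundle I M)))

/-- The differential of a function on `TM` at a point. -/
def dfn (f : TangentBundle I M → ℝ) (v : TangentBundle I M) :
    TangentSpace I.tangent v →L[ℝ] ℝ :=
  mfderiv I.tangent 𝓘(ℝ, ℝ) f v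

/-- The function `ḟ` on `TM` associated to `f : M → ℝ`. -/
def fdot (f : M → ℝ) : TangentBundle I M → ℝ :=
  fun v => mfderiv I 𝓘(ℝ, ℝ) f v.proj v.snd

/-- The function `α̇` on `TM` associated to a 1-form `α` on `M`. -/
def adot (α : OneFormM I M) : TangentBundle I M → ℝ := fun v => α v.proj v.snd

/-- The kinetic energy of a metric. -/
def kinT (g : Metric2 I M) : TangentBundle I M → ℝ :=
  fun v => (1 / 2 : ℝ) * g v.proj v.snd v.snd

/-- `θ` is the Liouville form of the metric `g`: `θ_{v} = i_v T₂` pulled back to `TM`. -/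
def IsLiouvilleForm (g : Metric2 I M) (θ : OneFormTB I M) : Prop :=
  ∀ v : TangentBundle I M, θ v = (g v.proj v.snd).comp (dproj v)

/-- `lie` is the Lie bracket of vector fields on `TM`, characterized on smooth functions. -/
def IsLieBracket (lie : VFTB I M → VFTB I M → VFTB I M) : Prop :=
  ∀ X Y : VFTB I M, SmoothVF X → SmoothVF Y → ∀ f : TangentBundle I M → ℝ,
    ContMDiff I.tangent 𝓘(ℝ, ℝ) (⊤ : ℕ∞) f → ∀ v,
      dfn f v (lie X Y v) =
        dfn (fun w => dfn f w (Y w)) v (X v) - dfn (fun w => dfn f w (X w)) v (Y v)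

/-- `ω₂` is the exterior derivative of the 1-form `θ` on `TM` (invariant formula). -/
def IsExtDerivOf (lie : VFTB I M → VFTB I M → VFTB I M) (θ : OneFormTB I M)
    (ω₂ : TwoFormTB I M) : Prop :=
  ∀ X Y : VFTB I M, SmoothVF X → SmoothVF Y → ∀ v,
    ω₂ v (X v) (Y v) =
      dfn (fun w => θ w (Y w)) v (X v) - dfn (fun w => θ w (X w)) v (Y v)
      - θ v (lie X Y v)

/-- A pointwise 1-form at `v` belongs to the contact system: it is horizontal and kills `v`. -/
def InContactAt (v : TangentBundle I M) (ω : TangentSpace I.tangent v →L[ℝ] ℝ) : Prop :=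
  ∃ φ : TangentSpace I v.proj →L[ℝ] ℝ, φ v.snd = 0 ∧ ω = φ.comp (dproj v)

/-- A vector field `δ` on `TM` projects to the vector field `vb` on `M`. -/
def Projects (δ : VFTB I M) (vb : VFM I M) : Prop :=
  ∀ v : TangentBundle I M, dproj v (δ v) = vb v.proj

/-- `δ` is the prolongation of the vector field `vb` to `TM`:
it projects to `vb` (so `δ (f∘π) = (vb f)∘π`) and satisfies Euler's commutation formula
`δ ∘ \dot d = \dot d ∘ δ` on smooth functions of `M`. -/
def IsProlongation (vb : VFM I M) (δ : VFTB I M) : Prop :=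
  (∀ f : M → ℝ, ContMDiff I 𝓘(ℝ, ℝ) (⊤ : ℕ∞) f → ∀ v : TangentBundle I M,
      dfn (fun w : TangentBundle I M => f w.proj) v (δ v)
        = mfderiv I 𝓘(ℝ, ℝ) f v.proj (vb v.proj)) ∧
  (∀ f : M → ℝ, ContMDiff I 𝓘(ℝ, ℝ) (⊤ : ℕ∞) f → ∀ v : TangentBundle I M,
      dfn (fdot f) v (δ v) = fdot (fun a => mfderiv I 𝓘(ℝ, ℝ) f a (vb a)) v)

/-- A time constraint for `M`: a connected closed hypersurface of `TM`, missing the zero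
section, projecting (regularly) onto `M`, locally cut out by equations `ḟ = 1` with
`f` a smooth function on `M` (the local exact representatives of the class of time). -/
def IsTimeConstraint (U : Set (TangentBundle I M)) : Prop :=
  IsClosed U ∧ IsConnected U ∧ (∀ v ∈ U, v.snd ≠ 0) ∧
  (∀ a : M, ∃ v ∈ U, (Bundle.TotalSpace.proj : TangentBundle I M → M) v = a) ∧
  (∀ v ∈ U, ∃ (W : Set (TangentBundle I M)) (f : M → ℝ), IsOpen W ∧ v ∈ W ∧
      ContMDiff I 𝓘(ℝ, ℝ) (⊤ : ℕ∞) f ∧ ∀ w ∈ W, (w ∈ U ↔ fdot f w = 1))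

/-- A 1-form on `M` is closed iff it is locally exact. -/
def IsClosedOneForm (τ : OneFormM I M) : Prop :=
  ∀ a : M, ∃ s ∈ nhds a, ∃ f : M → ℝ, ContMDiff I 𝓘(ℝ, ℝ) (⊤ : ℕ∞) f ∧
    ∀ b ∈ s, τ b = mfderiv I 𝓘(ℝ, ℝ) f b

/-- on an open set `U ⊆ TM` missing the zero section, a 1-form `τ`
belongs to the class of time (`τ ≡ α/α̇ mod Ω` at each point, for every 1-form `α` on
`M` with `α̇ ≠ 0` there) iff `τ` is horizontal and `⟨τ, \dot d⟩ = 1`; consequently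
`⟨τ, D⟩ = 1` for every second order differential equation `D`. -/
theorem class_of_time_characterization (U : Set (TangentBundle I M)) (hUopen : IsOpen U)
    (hzero : ∀ v ∈ U, v.snd ≠ 0) (τ : OneFormTB I M) :
    ((∀ v ∈ U, ∀ α : OneFormM I M, adot α v ≠ 0 →
        InContactAt v (τ v - (adot α v)⁻¹ • (α v.proj).comp (dproj v))) ↔
      (∀ v ∈ U, ∃ φ : TangentSpace I v.proj →L[ℝ] ℝ,
        φ v.snd = 1 ∧ τ v = φ.comp (dproj v))) ∧
    ((∀ v ∈ U, ∀ α : OneFormM I M, adot α v ≠ 0 →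
        InContactAt v (τ v - (adot α v)⁻¹ • (α v.proj).comp (dproj v))) →
      ∀ D : VFTB I M, IsSecondOrder D → ∀ v ∈ U, τ v (D v) = 1) := by
  have key : (∀ v ∈ U, ∀ α : OneFormM I M, adot α v ≠ 0 →
        InContactAt v (τ v - (adot α v)⁻¹ • (α v.proj).comp (dproj v))) →
      ∀ v ∈ U, ∃ φ : TangentSpace I v.proj →L[ℝ] ℝ,
        φ v.snd = 1 ∧ τ v = φ.comp (dproj v) := by
    intro h v hv
    have hne : (show E from v.snd) ≠ 0 := hzero v hv
    obtain ⟨g, -, hg⟩ := exists_dual_vector ℝ _ (norm_ne_zero_iff.mpr hne)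
    have hgx : g (show E from v.snd) ≠ 0 := by
      rw [hg]
      exact_mod_cast norm_ne_zero_iff.mpr hne
    set α : OneFormM I M := fun _ => g with hα
    have hadot : adot α v ≠ 0 := hgx
    obtain ⟨φ₀, hφ₀0, hφ₀⟩ := h v hv α hadot
    refine ⟨φ₀ + (adot α v)⁻¹ • α v.proj, ?_, ?_⟩
    · show φ₀ v.snd + (adot α v)⁻¹ • α v.proj v.snd = 1
      have hr : α v.proj v.snd = adot α v := rfl
      rw [hφ₀0, hr, smul_eq_mul, inv_mul_cancel₀ hadot, zero_add]
    · have : τ v = φ₀.comp (dproj v) + (adot α v)⁻¹ • (α v.proj).comp (dproj v) := by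
        rw [← hφ₀]; abel
      rw [this]
      ext x
      simp [ContinuousLinearMap.comp_apply]
  constructor
  · constructor
    · exact key
    · intro h v hv α hα
      obtain ⟨φ, hφ1, hφ⟩ := h v hv
      refine ⟨φ - (adot α v)⁻¹ • α v.proj, ?_, ?_⟩
      · show φ v.snd - (adot α v)⁻¹ • α v.proj v.snd = 0
        have hr : α v.proj v.snd = adot α v := rfl
        rw [hφ1, hr, smul_eq_mul, inv_mul_cancel₀ hα, sub_self]
      · rw [hφ]
        ext x
        simp [ContinuousLinearMap.comp_apply]
  · intro h D hD v hv
    obtain ⟨φ, hφ1, hφ⟩ := key h v hv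
    rw [hφ]
    simp [ContinuousLinearMap.comp_apply, hD v, hφ1]
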